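/- Under the same hypotheses, if moreover u = 0 (i.e., ∇v·f ≤ 0 on X and v ≥ 0 on ∂X), then the set {x₀ ∈ int(X) : v(x₀) < 0} is contained in X∞ = ∩_{t>0} X_t and is positively invariant under the flow of f. -/
import Mathlib


open Set

/-- Auxiliary: `v` is nonincreasing along a trajectory that stays in `X`. -/
lemma v_mono_aux
    {n : ℕ} {X : Set (EuclideanSpace ℝ (Fin n))}
    {f : EuclideanSpace ℝ (Fin n) → EuclideanSpace ℝ (Fin n)}
    {v : EuclideanSpace ℝ (Fin n) → ℝ}
    {v' : EuclideanSpace ℝ (Fin n) → EuclideanSpace ℝ (Fin n) →L[ℝ] ℝ}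
    (hv : ∀ x ∈ X, HasFDerivAt v (v' x) x)
    (hvf : ∀ x ∈ X, v' x (f x) ≤ 0)
    (γ : ℝ → EuclideanSpace ℝ (Fin n))
    (hγd : ∀ t, HasDerivAt γ (f (γ t)) t)
    {τ : ℝ} (hτ : 0 ≤ τ) (hγX : ∀ s ∈ Icc (0 : ℝ) τ, γ s ∈ X) :
    v (γ τ) ≤ v (γ 0) := by
  have hg : ∀ s ∈ Icc (0 : ℝ) τ, HasDerivAt (fun t => v (γ t))
      (v' (γ s) (f (γ s))) s := fun s hs =>
    (hv _ (hγX s hs)).comp_hasDerivAt s (hγd s)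
  have hanti : AntitoneOn (fun t => v (γ t)) (Icc 0 τ) := by
    apply antitoneOn_of_deriv_nonpos (convex_Icc 0 τ)
    · exact fun s hs => (hg s hs).continuousAt.continuousWithinAt
    · intro s hs
      exact (hg s (interior_subset hs)).differentiableAt.differentiableWithinAt
    · intro s hs
      rw [(hg s (interior_subset hs)).deriv]
      exact hvf _ (hγX s (interior_subset hs))
  exact hanti (left_mem_Icc.mpr hτ) (right_mem_Icc.mpr hτ) hτ

/-- In the `u = 0` case (`∇v·f ≤ 0` on `X`, `v ≥ 0` on `∂X`), the set
`{x₀ ∈ int X : v x₀ < 0}` is contained in `X∞ = ∩_{t>0} X_t` and is positively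
invariant under the flow of `f`. -/
theorem dual_feasible_u_zero_subset_MPI_and_invariant
    {n : ℕ} (X : Set (EuclideanSpace ℝ (Fin n))) (hX : IsCompact X)
    (f : EuclideanSpace ℝ (Fin n) → EuclideanSpace ℝ (Fin n))
    (K : NNReal) (hf : LipschitzOnWith K f X)
    (v w : EuclideanSpace ℝ (Fin n) → ℝ)
    (v' : EuclideanSpace ℝ (Fin n) → EuclideanSpace ℝ (Fin n) →L[ℝ] ℝ)
    (hv : ∀ x ∈ X, HasFDerivAt v (v' x) x)
    (hw : ContinuousOn w X)
    (hvf : ∀ x ∈ X, v' x (f x) ≤ 0)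
    (hw1 : ∀ x ∈ X, v x + 1 ≤ w x)
    (hw0 : ∀ x ∈ X, 0 ≤ w x)
    (hvb : ∀ x ∈ frontier X, 0 ≤ v x)
    -- the flow of ẋ = f(x)
    (φ : EuclideanSpace ℝ (Fin n) → ℝ → EuclideanSpace ℝ (Fin n))
    (hφ0 : ∀ x, φ x 0 = x)
    (hφd : ∀ x t, HasDerivAt (φ x) (f (φ x t)) t)
    -- X_t and X∞
    (Xt : ℝ → Set (EuclideanSpace ℝ (Fin n)))
    (hXt : ∀ t, Xt t = {x₀ ∈ interior X | ∀ s ∈ Icc (0 : ℝ) t, φ x₀ s ∈ interior X})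
    (Xinf : Set (EuclideanSpace ℝ (Fin n)))
    (hXinf : Xinf = {x₀ ∈ interior X | ∀ s ≥ (0 : ℝ), φ x₀ s ∈ interior X}) :
    (Xinf = ⋂ t > (0 : ℝ), Xt t) ∧
    {x₀ ∈ interior X | v x₀ < 0} ⊆ Xinf ∧
    (∀ x₀ ∈ {x₀ ∈ interior X | v x₀ < 0}, ∀ t ≥ (0 : ℝ),
      φ x₀ t ∈ {x₀ ∈ interior X | v x₀ < 0}) := by
  have hXcl : IsClosed X := hX.isClosed
  -- Key claim: trajectories starting in {x₀ ∈ int X | v x₀ < 0} stay in interior X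
  have key : ∀ x₀ ∈ interior X, v x₀ < 0 → ∀ s ≥ (0 : ℝ), φ x₀ s ∈ interior X := by
    intro x₀ hx₀ hvx₀ s hs
    by_contra hbad
    have hφc : Continuous (φ x₀) :=
      continuous_iff_continuousAt.mpr fun t => (hφd x₀ t).continuousAt
    set B : Set ℝ := {t | 0 ≤ t ∧ φ x₀ t ∉ interior X} with hB
    have hBne : B.Nonempty := ⟨s, hs, hbad⟩
    have hBclosed : IsClosed B := by
      have : B = Ici (0:ℝ) ∩ φ x₀ ⁻¹' (interior X)ᶜ := by
        ext t; simp [hB, mem_preimage]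
      rw [this]
      exact isClosed_Ici.inter (isOpen_interior.isClosed_compl.preimage hφc)
    have hBbdd : BddBelow B := ⟨0, fun t ht => ht.1⟩
    set τ := sInf B with hτ
    have hτB : τ ∈ B := hBclosed.csInf_mem hBne hBbdd
    have hτ0 : 0 ≤ τ := hτB.1
    have hτne : τ ≠ 0 := by
      intro h
      apply hτB.2
      rw [h, hφ0]; exact hx₀
    have hτpos : 0 < τ := lt_of_le_of_ne hτ0 (Ne.symm hτne)
    have hlt : ∀ t, 0 ≤ t → t < τ → φ x₀ t ∈ interior X := by
      intro t ht0 htτ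
      by_contra h
      exact absurd (csInf_le hBbdd ⟨ht0, h⟩) (not_le.mpr htτ)
    -- φ x₀ τ ∈ X
    have hτX : φ x₀ τ ∈ X := by
      have hcl : φ x₀ τ ∈ closure X := by
        have hne : (nhdsWithin τ (Ico 0 τ)).NeBot := by
          rw [← mem_closure_iff_nhdsWithin_neBot, closure_Ico (ne_of_lt hτpos)]
          exact right_mem_Icc.mpr hτ0
        refine mem_closure_of_tendsto (hφc.continuousAt.continuousWithinAt
          (s := Ico 0 τ)) ?_
        filter_upwards [self_mem_nhdsWithin] with t ht
        exact interior_subset (hlt t ht.1 ht.2)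
      rwa [hXcl.closure_eq] at hcl
    -- hence φ x₀ τ ∈ frontier X
    have hτfr : φ x₀ τ ∈ frontier X := by
      rw [hXcl.frontier_eq]
      exact ⟨hτX, hτB.2⟩
    -- trajectory stays in X on [0, τ]
    have hIccX : ∀ t ∈ Icc (0:ℝ) τ, φ x₀ t ∈ X := by
      intro t ht
      rcases eq_or_lt_of_le ht.2 with h | h
      · rw [h]; exact hτX
      · exact interior_subset (hlt t ht.1 h)
    have hmono := v_mono_aux hv hvf (φ x₀) (hφd x₀) hτ0 hIccX
    rw [hφ0] at hmono
    exact absurd (hvb _ hτfr) (not_le.mpr (lt_of_le_of_lt hmono hvx₀))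
  -- v is nonincreasing along such trajectories
  have vdec : ∀ x₀ ∈ interior X, v x₀ < 0 → ∀ t ≥ (0 : ℝ), v (φ x₀ t) ≤ v x₀ := by
    intro x₀ hx₀ hvx₀ t ht
    have := v_mono_aux hv hvf (φ x₀) (hφd x₀) ht
      (fun s hs => interior_subset (key x₀ hx₀ hvx₀ s hs.1))
    rwa [hφ0] at this
  refine ⟨?_, ?_, ?_⟩
  · ext x₀
    simp only [hXinf, hXt, mem_iInter, mem_setOf_eq]
    constructor
    · intro ⟨h1, h2⟩ t ht
      exact ⟨h1, fun s hs => h2 s hs.1⟩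
    · intro h
      refine ⟨(h 1 one_pos).1, fun s hs => ?_⟩
      rcases eq_or_lt_of_le hs with h0 | h0
      · rw [← h0, hφ0]; exact (h 1 one_pos).1
      · exact (h s h0).2 s ⟨le_of_lt h0, le_refl s⟩
  · intro x₀ hx₀
    rw [hXinf]
    exact ⟨hx₀.1, key x₀ hx₀.1 hx₀.2⟩
  · intro x₀ hx₀ t ht
    exact ⟨key x₀ hx₀.1 hx₀.2 t ht,
      lt_of_le_of_lt (vdec x₀ hx₀.1 hx₀.2 t ht) hx₀.2⟩
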